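/- arXiv:1811.00816 — 3 statements merged into one kernel-verified Lean document; each statement's English description precedes it below -/
import Mathlib

section
/- Let M be a noncrossing perfect matching on the points {1, …, 2m}. For every p with 1 ≤ p < 2m, the nesting-values of the edge of M incident to p and of the edge of M incident to p+1 differ by at most one, i.e., |nv(p) − nv(p+1)| ≤ 1. -/
/-- The smaller endpoint of the matching edge through `p`, for a matching given by the
involution `μ`. -/
def matchLo (μ : ℕ → ℕ) (p : ℕ) : ℕ := min p (μ p)

/-- The larger endpoint of the matching edge through `p`. -/
def matchHi (μ : ℕ → ℕ) (p : ℕ) : ℕ := max p (μ p)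

/-- `μ` encodes a perfect matching on the points `{1, …, 2m}`: it is a fixed-point-free
involution of `{1, …, 2m}`.  The edges of the matching are the pairs `{p, μ p}`. -/
def IsPerfectMatchingOn (m : ℕ) (μ : ℕ → ℕ) : Prop :=
  ∀ p ∈ Set.Icc 1 (2 * m), μ p ∈ Set.Icc 1 (2 * m) ∧ μ (μ p) = p ∧ μ p ≠ p

/-- The matching `μ` on `{1, …, 2m}` is noncrossing: there are no edges `{a,b}`, `{c,d}`
with `a < c < b < d`. -/
def IsNoncrossingOn (m : ℕ) (μ : ℕ → ℕ) : Prop :=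
  ∀ p ∈ Set.Icc 1 (2 * m), ∀ q ∈ Set.Icc 1 (2 * m),
    ¬ (matchLo μ p < matchLo μ q ∧ matchLo μ q < matchHi μ p ∧ matchHi μ p < matchHi μ q)

/-- The matching edge through `q` nests the matching edge through `p`. -/
def MatchNests (μ : ℕ → ℕ) (q p : ℕ) : Prop :=
  matchLo μ q < matchLo μ p ∧ matchHi μ p < matchHi μ q

/-- `nv` is the nesting-value function of the matching `μ` on `{1, …, 2m}` (read at the
points: `nv p` is the nesting-value of the edge through `p`): the nesting-value is `0` if
no edge of the matching nests the given edge, and otherwise it is one plus the maximum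
nesting-value among the edges nesting it. -/
def IsNestingValue (m : ℕ) (μ : ℕ → ℕ) (nv : ℕ → ℕ) : Prop :=
  ∀ p ∈ Set.Icc 1 (2 * m),
    ((¬ ∃ q ∈ Set.Icc 1 (2 * m), MatchNests μ q p) → nv p = 0) ∧
    ((∃ q ∈ Set.Icc 1 (2 * m), MatchNests μ q p) →
      ∃ q ∈ Set.Icc 1 (2 * m), MatchNests μ q p ∧ nv p = nv q + 1 ∧
        ∀ q' ∈ Set.Icc 1 (2 * m), MatchNests μ q' p → nv q' ≤ nv q)


section NVAux

open Classical in
/-- The set of lo-endpoints of edges of the matching that nest the edge through `p`. -/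
noncomputable def nestSet (m : ℕ) (μ : ℕ → ℕ) (p : ℕ) : Finset ℕ :=
  (Finset.Icc 1 (2 * m)).filter fun q => matchLo μ q = q ∧ MatchNests μ q p

lemma mem_nestSet {m : ℕ} {μ : ℕ → ℕ} {p g : ℕ} :
    g ∈ nestSet m μ p ↔ g ∈ Set.Icc 1 (2 * m) ∧ matchLo μ g = g ∧ MatchNests μ g p := by
  simp [nestSet, Finset.mem_filter, Finset.mem_Icc, Set.mem_Icc, and_assoc]

lemma nests_trans {μ : ℕ → ℕ} {a b c : ℕ} (h1 : MatchNests μ a b) (h2 : MatchNests μ b c) :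
    MatchNests μ a c := by
  unfold MatchNests at h1 h2 ⊢
  omega

lemma edge_facts {m : ℕ} {μ : ℕ → ℕ} (hμ : IsPerfectMatchingOn m μ) {p : ℕ}
    (hp : p ∈ Set.Icc 1 (2 * m)) :
    matchLo μ p ∈ Set.Icc 1 (2 * m) ∧
    matchLo μ p ≤ p ∧ p ≤ matchHi μ p ∧ matchLo μ p < matchHi μ p ∧
    matchLo μ (matchLo μ p) = matchLo μ p ∧
    matchHi μ (matchLo μ p) = matchHi μ p ∧
    matchLo μ (matchHi μ p) = matchLo μ p := by
  obtain ⟨hin, hinv, hne⟩ := hμ p hp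
  simp only [Set.mem_Icc] at hin hp ⊢
  rcases le_total p (μ p) with h | h <;>
    simp only [matchLo, matchHi, min_eq_left h, min_eq_right h, max_eq_left h,
      max_eq_right h, hinv, and_true, true_and] <;>
    omega

lemma nests_of_between {m : ℕ} {μ : ℕ → ℕ} (hμ : IsPerfectMatchingOn m μ)
    (hnc : IsNoncrossingOn m μ) {g p : ℕ} (hg : g ∈ Set.Icc 1 (2 * m))
    (hp : p ∈ Set.Icc 1 (2 * m))
    (h1 : matchLo μ g < p) (h2 : p < matchHi μ g)
    (hne : matchLo μ p ≠ matchLo μ g) : MatchNests μ g p := by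
  obtain ⟨_, g2, g3, g4, g5, g6, g7⟩ := edge_facts hμ hg
  obtain ⟨_, p2, p3, p4, p5, p6, p7⟩ := edge_facts hμ hp
  have hc1 := hnc g hg p hp
  have hc2 := hnc p hp g hg
  have hhi : matchHi μ g ≠ matchHi μ p := by
    intro h
    apply hne
    rw [← p7, ← h, g7]
  have hpe : matchLo μ p = p ∨ matchHi μ p = p := by
    simp only [matchLo, matchHi]; omega
  unfold MatchNests
  omega

lemma depth {m : ℕ} {μ nv : ℕ → ℕ} (hμ : IsPerfectMatchingOn m μ)
    (hnc : IsNoncrossingOn m μ) (hnv : IsNestingValue m μ nv) :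
    ∀ n p, p ∈ Set.Icc 1 (2 * m) → (nestSet m μ p).card = n → nv p = n := by
  intro n
  induction n using Nat.strong_induction_on with
  | _ n ih =>
    intro p hp hcard
    by_cases hex : ∃ q ∈ Set.Icc 1 (2 * m), MatchNests μ q p
    case neg =>
      have hz := (hnv p hp).1 hex
      have he : nestSet m μ p = ∅ := by
        rw [Finset.eq_empty_iff_forall_notMem]
        intro g hg
        obtain ⟨hgI, _, hgp⟩ := mem_nestSet.1 hg
        exact hex ⟨g, hgI, hgp⟩
      rw [he, Finset.card_empty] at hcard
      omega
    case pos =>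
      obtain ⟨q, hqI, hqp, hval, hmax⟩ := (hnv p hp).2 hex
      obtain ⟨qI, q2, q3, q4, q5, q6, q7⟩ := edge_facts hμ hqI
      obtain ⟨_, p2, p3, p4, _, _, _⟩ := edge_facts hμ hp
      have hqp' := hqp
      unfold MatchNests at hqp'
      have hq0p : MatchNests μ (matchLo μ q) p := by
        unfold MatchNests
        rw [q5, q6]
        exact hqp'
      have hq0mem : matchLo μ q ∈ nestSet m μ p := mem_nestSet.2 ⟨qI, q5, hq0p⟩
      have hq0notq : matchLo μ q ∉ nestSet m μ q := by
        intro hmem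
        obtain ⟨_, _, hx⟩ := mem_nestSet.1 hmem
        unfold MatchNests at hx
        omega
      -- any edge nesting p has its nestSet contained in the nestSet of p minus itself
      have hsubgen : ∀ r, r ∈ Set.Icc 1 (2 * m) → MatchNests μ r p →
          nestSet m μ r ⊆ (nestSet m μ p).erase (matchLo μ r) ∧ (nestSet m μ r).card < n := by
        intro r hrI hrp
        obtain ⟨rI, _, _, _, r5, r6, _⟩ := edge_facts hμ hrI
        have hrp' := hrp
        unfold MatchNests at hrp'
        have hr0p : MatchNests μ (matchLo μ r) p := by
          unfold MatchNests
          rw [r5, r6]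
          exact hrp'
        have hr0mem : matchLo μ r ∈ nestSet m μ p := mem_nestSet.2 ⟨rI, r5, hr0p⟩
        have hsub : nestSet m μ r ⊆ (nestSet m μ p).erase (matchLo μ r) := by
          intro g hg
          obtain ⟨hgI, hgl, hgr⟩ := mem_nestSet.1 hg
          have hgr' := hgr
          unfold MatchNests at hgr'
          exact Finset.mem_erase.2 ⟨by omega, mem_nestSet.2 ⟨hgI, hgl, nests_trans hgr hrp⟩⟩
        refine ⟨hsub, ?_⟩
        have h1 := Finset.card_le_card hsub
        have h2 := Finset.card_erase_lt_of_mem hq0mem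
        have h3 := Finset.card_erase_lt_of_mem hr0mem
        omega
      obtain ⟨hsubq, hcardq⟩ := hsubgen q hqI hqp
      have hnvq := ih _ hcardq q hqI rfl
      have hsubq' : (nestSet m μ p).erase (matchLo μ q) ⊆ nestSet m μ q := by
        intro g hg
        obtain ⟨hgne, hgmem⟩ := Finset.mem_erase.1 hg
        obtain ⟨hgI, hgl, hgp⟩ := mem_nestSet.1 hgmem
        have hgp' := hgp
        unfold MatchNests at hgp'
        rcases Nat.lt_or_ge g (matchLo μ q) with hlt | hge
        · have hn : MatchNests μ g (matchLo μ q) :=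
            nests_of_between hμ hnc hgI qI (by omega) (by omega) (by omega)
          unfold MatchNests at hn
          rw [q5, q6] at hn
          exact mem_nestSet.2 ⟨hgI, hgl, hn⟩
        · have hn : MatchNests μ (matchLo μ q) g :=
            nests_of_between hμ hnc qI hgI (by omega) (by omega) (by omega)
          have hnq : MatchNests μ q g := by
            unfold MatchNests at hn ⊢
            omega
          have hq0g : matchLo μ q ∈ nestSet m μ g := mem_nestSet.2 ⟨qI, q5, hn⟩
          have hsubQG : insert (matchLo μ q) (nestSet m μ q) ⊆ nestSet m μ g := by
            intro h hh
            rcases Finset.mem_insert.1 hh with h' | h'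
            · exact h' ▸ hq0g
            · obtain ⟨hI, hl, hq⟩ := mem_nestSet.1 h'
              exact mem_nestSet.2 ⟨hI, hl, nests_trans hq hnq⟩
          obtain ⟨_, hcardg⟩ := hsubgen g hgI hgp
          have hnvg := ih _ hcardg g hgI rfl
          have hge2 := hmax g hgI hgp
          have hcardins := Finset.card_le_card hsubQG
          rw [Finset.card_insert_of_notMem hq0notq] at hcardins
          exfalso
          omega
      have hEq : nestSet m μ p = insert (matchLo μ q) (nestSet m μ q) := by
        apply Finset.Subset.antisymm
        · intro g hg
          by_cases h : g = matchLo μ q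
          · exact Finset.mem_insert.2 (Or.inl h)
          · exact Finset.mem_insert_of_mem (hsubq' (Finset.mem_erase.2 ⟨h, hg⟩))
        · intro g hg
          rcases Finset.mem_insert.1 hg with h | h
          · exact h ▸ hq0mem
          · exact Finset.mem_of_mem_erase (hsubq h)
      rw [hEq, Finset.card_insert_of_notMem hq0notq] at hcard
      omega

end NVAux

/-- Let `M` be a noncrossing perfect matching on the points `{1, …, 2m}`.
For every `p` with `1 ≤ p < 2m`, the nesting-values of the edge incident to `p` and of the
edge incident to `p+1` differ by at most one: `|nv(p) − nv(p+1)| ≤ 1`. -/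
theorem nestingValue_consecutive_points (m : ℕ) (hm : 1 ≤ m) (μ nv : ℕ → ℕ)
    (hμ : IsPerfectMatchingOn m μ) (hnc : IsNoncrossingOn m μ)
    (hnv : IsNestingValue m μ nv) :
    ∀ p : ℕ, 1 ≤ p → p + 1 ≤ 2 * m →
      nv p ≤ nv (p + 1) + 1 ∧ nv (p + 1) ≤ nv p + 1 := by
  intro p hp1 hp2
  have hpI : p ∈ Set.Icc 1 (2 * m) := Set.mem_Icc.2 ⟨hp1, by omega⟩
  have hp1I : p + 1 ∈ Set.Icc 1 (2 * m) := Set.mem_Icc.2 ⟨by omega, hp2⟩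
  obtain ⟨_, pa2, pa3, pa4, pa5, pa6, pa7⟩ := edge_facts hμ hpI
  obtain ⟨_, pb2, pb3, pb4, pb5, pb6, pb7⟩ := edge_facts hμ hp1I
  have hA : nestSet m μ p ⊆ insert (matchLo μ (p + 1)) (nestSet m μ (p + 1)) := by
    intro g hg
    obtain ⟨hgI, hgl, hgp⟩ := mem_nestSet.1 hg
    by_cases hcase : g = matchLo μ (p + 1)
    · exact Finset.mem_insert.2 (Or.inl hcase)
    · obtain ⟨_, g2, g3, g4, g5, g6, g7⟩ := edge_facts hμ hgI
      have hgp' := hgp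
      unfold MatchNests at hgp'
      have hhi : matchHi μ g ≠ p + 1 := by
        intro h
        exact hcase (by rw [← h, g7, hgl])
      have hn : MatchNests μ g (p + 1) :=
        nests_of_between hμ hnc hgI hp1I (by omega) (by omega)
          (by rw [hgl]; exact fun h => hcase h.symm)
      exact Finset.mem_insert_of_mem (mem_nestSet.2 ⟨hgI, hgl, hn⟩)
  have hB : nestSet m μ (p + 1) ⊆ insert (matchLo μ p) (nestSet m μ p) := by
    intro g hg
    obtain ⟨hgI, hgl, hgp⟩ := mem_nestSet.1 hg
    by_cases hcase : g = matchLo μ p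
    · exact Finset.mem_insert.2 (Or.inl hcase)
    · obtain ⟨_, g2, g3, g4, g5, g6, g7⟩ := edge_facts hμ hgI
      have hgp' := hgp
      unfold MatchNests at hgp'
      have hgp0 : g ≠ p := by
        intro h
        subst h
        exact hcase hgl.symm
      have hn : MatchNests μ g p :=
        nests_of_between hμ hnc hgI hpI (by omega) (by omega)
          (by rw [hgl]; exact fun h => hcase h.symm)
      exact Finset.mem_insert_of_mem (mem_nestSet.2 ⟨hgI, hgl, hn⟩)
  have e1 : nv p = (nestSet m μ p).card := depth hμ hnc hnv _ p hpI rfl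
  have e2 : nv (p + 1) = (nestSet m μ (p + 1)).card := depth hμ hnc hnv _ (p + 1) hp1I rfl
  have c1 : (nestSet m μ p).card ≤ (nestSet m μ (p + 1)).card + 1 := by
    calc (nestSet m μ p).card
        ≤ (insert (matchLo μ (p + 1)) (nestSet m μ (p + 1))).card := Finset.card_le_card hA
      _ ≤ (nestSet m μ (p + 1)).card + 1 := Finset.card_insert_le _ _
  have c2 : (nestSet m μ (p + 1)).card ≤ (nestSet m μ p).card + 1 := by
    calc (nestSet m μ (p + 1)).card
        ≤ (insert (matchLo μ p) (nestSet m μ p)).card := Finset.card_le_card hB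
      _ ≤ (nestSet m μ p).card + 1 := Finset.card_insert_le _ _
  omega
end

section
/- Let M be a noncrossing perfect matching on the points {1, …, 2m}. For all i ≤ j in {1, …, 2m}, the set { nv(p) : i ≤ p ≤ j } of nesting-values of the edges incident to the points of the interval [i, j] is a set of consecutive integers; in particular, for every integer t with min_{i ≤ p ≤ j} nv(p) ≤ t ≤ max_{i ≤ p ≤ j} nv(p) there exists a point p with i ≤ p ≤ j and nv(p) = t. -/
instance (μ : ℕ → ℕ) (q p : ℕ) : Decidable (MatchNests μ q p) := by
  unfold MatchNests; exact instDecidableAnd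


/-- set of lo-endpoints of edges nesting the edge of `p` -/
def Nset (m : ℕ) (μ : ℕ → ℕ) (p : ℕ) : Finset ℕ :=
  (Finset.Icc 1 (2*m)).filter (fun q => q < μ q ∧ MatchNests μ q p)

/-- set of lo-endpoints of edges strictly containing the point `p` -/
def Fset (m : ℕ) (μ : ℕ → ℕ) (p : ℕ) : Finset ℕ :=
  (Finset.Icc 1 (2*m)).filter (fun q => q < p ∧ p < μ q)

lemma matchNests_mu {μ : ℕ → ℕ} {q p : ℕ} (h : μ (μ q) = q) :
    MatchNests μ (μ q) p ↔ MatchNests μ q p := by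
  unfold MatchNests matchLo matchHi
  rw [h, min_comm (μ q) q, max_comm (μ q) q]

lemma strict_mem_iff_nests {m : ℕ} {μ : ℕ → ℕ} (hμ : IsPerfectMatchingOn m μ)
    (hnc : IsNoncrossingOn m μ) {p q : ℕ} (hp : p ∈ Set.Icc 1 (2*m))
    (hq : q ∈ Set.Icc 1 (2*m)) (hqlo : q < μ q) :
    (q < p ∧ p < μ q) ↔ MatchNests μ q p := by
  obtain ⟨hq1, hq2, hq3⟩ := hμ q hq
  obtain ⟨hp1, hp2, hp3⟩ := hμ p hp
  have hloq : matchLo μ q = q := min_eq_left hqlo.le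
  have hhiq : matchHi μ q = μ q := max_eq_right hqlo.le
  constructor
  · rintro ⟨h1, h2⟩
    rcases lt_or_gt_of_ne hp3 with hcase | hcase
    · -- μ p < p : p is the hi endpoint
      have hlop : matchLo μ p = μ p := min_eq_right hcase.le
      have hhip : matchHi μ p = p := max_eq_left hcase.le
      refine ⟨?_, ?_⟩
      · rw [hloq, hlop]
        by_contra hcon
        push_neg at hcon
        rcases hcon.lt_or_eq with hlt | heq
        · exact hnc p hp q hq ⟨by omega, by omega, by omega⟩
        · have : μ q = p := by rw [← heq, hp2]
          omega
      · rw [hhiq, hhip]; exact h2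
    · -- p < μ p : p is the lo endpoint
      have hlop : matchLo μ p = p := min_eq_left hcase.le
      have hhip : matchHi μ p = μ p := max_eq_right hcase.le
      refine ⟨by omega, ?_⟩
      rw [hhiq, hhip]
      by_contra hcon
      push_neg at hcon
      rcases hcon.lt_or_eq with hlt | heq
      · exact hnc q hq p hp ⟨by omega, by omega, by omega⟩
      · have : q = p := by rw [← hq2, heq, hp2]
        omega
  · rintro ⟨h1, h2⟩
    rw [hloq] at h1; rw [hhiq] at h2
    constructor
    · exact lt_of_lt_of_le h1 (min_le_left _ _)
    · exact lt_of_le_of_lt (le_max_left _ _) h2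

lemma Nset_eq_Fset {m : ℕ} {μ : ℕ → ℕ} (hμ : IsPerfectMatchingOn m μ)
    (hnc : IsNoncrossingOn m μ) {p : ℕ} (hp : p ∈ Set.Icc 1 (2*m)) :
    Nset m μ p = Fset m μ p := by
  ext q
  simp only [Nset, Fset, Finset.mem_filter, Finset.mem_Icc]
  constructor
  · rintro ⟨hq, hlo, hn⟩
    have := (strict_mem_iff_nests hμ hnc hp (Set.mem_Icc.mpr hq) hlo).mpr hn
    exact ⟨hq, this⟩
  · rintro ⟨hq, h1, h2⟩
    have hlo : q < μ q := h1.trans h2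
    exact ⟨hq, hlo, (strict_mem_iff_nests hμ hnc hp (Set.mem_Icc.mpr hq) hlo).mp ⟨h1, h2⟩⟩

lemma matchLo_mem_Nset {m : ℕ} {μ : ℕ → ℕ} (hμ : IsPerfectMatchingOn m μ)
    {p q : ℕ} (hq : q ∈ Set.Icc 1 (2*m)) (hn : MatchNests μ q p) :
    matchLo μ q ∈ Nset m μ p ∧ μ (matchLo μ q) = matchHi μ q ∧ matchLo μ q < μ (matchLo μ q) := by
  obtain ⟨hq1, hq2, hq3⟩ := hμ q hq
  rcases lt_or_gt_of_ne hq3 with hc | hc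
  · -- μ q < q
    have hlo : matchLo μ q = μ q := min_eq_right hc.le
    have hhi : matchHi μ q = q := max_eq_left hc.le
    have hmem : μ q ∈ Nset m μ p := by
      simp only [Nset, Finset.mem_filter, Finset.mem_Icc]
      refine ⟨Set.mem_Icc.mp hq1, by rw [hq2]; exact hc, (matchNests_mu hq2).mpr hn⟩
    rw [hlo, hhi, hq2]
    exact ⟨hmem, rfl, hc⟩
  · have hlo : matchLo μ q = q := min_eq_left hc.le
    have hhi : matchHi μ q = μ q := max_eq_right hc.le
    have hmem : q ∈ Nset m μ p := by
      simp only [Nset, Finset.mem_filter, Finset.mem_Icc]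
      exact ⟨Set.mem_Icc.mp hq, hc, hn⟩
    rw [hlo, hhi]
    exact ⟨hmem, rfl, hc⟩

lemma Nset_subset {m : ℕ} {μ : ℕ → ℕ}
    {p q : ℕ} (hn : MatchNests μ q p) :
    Nset m μ q ⊆ (Nset m μ p).erase (matchLo μ q) := by
  intro r hr
  simp only [Nset, Finset.mem_filter, Finset.mem_Icc] at hr
  obtain ⟨hrI, hrlo, hrn⟩ := hr
  have hlor : matchLo μ r = r := min_eq_left hrlo.le
  refine Finset.mem_erase.mpr ⟨?_, ?_⟩
  · have := hrn.1
    rw [hlor] at this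
    omega
  · simp only [Nset, Finset.mem_filter, Finset.mem_Icc]
    exact ⟨hrI, hrlo, hrn.1.trans hn.1, hn.2.trans hrn.2⟩

lemma nv_eq_card {m : ℕ} {μ nv : ℕ → ℕ} (hμ : IsPerfectMatchingOn m μ)
    (hnc : IsNoncrossingOn m μ) (hnv : IsNestingValue m μ nv) :
    ∀ n : ℕ, ∀ p ∈ Set.Icc 1 (2*m), (Nset m μ p).card = n → nv p = n := by
  intro n
  induction n using Nat.strong_induction_on with
  | _ n IH =>
    intro p hp hcard
    rcases Nat.eq_zero_or_pos n with h0 | hpos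
    · subst h0
      apply (hnv p hp).1
      rintro ⟨q, hq, hn⟩
      obtain ⟨hmem, -, -⟩ := matchLo_mem_Nset hμ hq hn
      have : (Nset m μ p).Nonempty := ⟨_, hmem⟩
      simp [Finset.card_eq_zero.mp hcard] at this
    · have hne : (Nset m μ p).Nonempty := Finset.card_pos.mp (hcard ▸ hpos)
      set qk := (Nset m μ p).max' hne with hqk
      have hqkmem := (Nset m μ p).max'_mem hne
      have hqkfacts : qk ∈ Finset.Icc 1 (2*m) ∧ qk < μ qk ∧ MatchNests μ qk p := by
        have := hqkmem
        simp only [Nset, Finset.mem_filter] at this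
        exact ⟨this.1, this.2.1, this.2.2⟩
      obtain ⟨hqkI, hqklo, hqkn⟩ := hqkfacts
      have hqkIcc : qk ∈ Set.Icc 1 (2*m) := Set.mem_Icc.mpr (Finset.mem_Icc.mp hqkI)
      have hex : ∃ q ∈ Set.Icc 1 (2*m), MatchNests μ q p := ⟨qk, hqkIcc, hqkn⟩
      obtain ⟨qs, hqsI, hqsn, hnvp, hmax⟩ := (hnv p hp).2 hex
      -- every nesting point has `nv` value ≤ n - 1
      have hub : ∀ q ∈ Set.Icc 1 (2*m), MatchNests μ q p → nv q ≤ n - 1 := by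
        intro q hq hn
        obtain ⟨hmem, -, -⟩ := matchLo_mem_Nset hμ hq hn
        have hsub := Nset_subset (m := m) hn
        have hcardle : (Nset m μ q).card ≤ n - 1 := by
          calc (Nset m μ q).card ≤ ((Nset m μ p).erase (matchLo μ q)).card :=
                Finset.card_le_card hsub
            _ = n - 1 := by rw [Finset.card_erase_of_mem hmem, hcard]
        have := IH _ (by omega) q hq rfl
        omega
      -- the innermost nesting edge, through qk, has nv = n - 1
      have hNqk : Nset m μ qk = (Nset m μ p).erase qk := by
        have hloqk : matchLo μ qk = qk := min_eq_left hqklo.le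
        apply Finset.Subset.antisymm
        · have := Nset_subset (m := m) hqkn
          rwa [hloqk] at this
        · intro r hr
          obtain ⟨hrne, hrmem⟩ := Finset.mem_erase.mp hr
          have hrfacts : r ∈ Finset.Icc 1 (2*m) ∧ r < μ r ∧ MatchNests μ r p := by
            have := hrmem
            simp only [Nset, Finset.mem_filter] at this
            exact ⟨this.1, this.2.1, this.2.2⟩
          obtain ⟨hrI, hrlo, hrn⟩ := hrfacts
          have hrle : r ≤ qk := (Nset m μ p).le_max' r hrmem
          have hrlt : r < qk := lt_of_le_of_ne hrle hrne
          simp only [Nset, Finset.mem_filter]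
          refine ⟨hrI, hrlo, ?_⟩
          apply (strict_mem_iff_nests hμ hnc hqkIcc
            (Set.mem_Icc.mpr (Finset.mem_Icc.mp hrI)) hrlo).mp
          refine ⟨hrlt, ?_⟩
          -- qk < μ r : qk = matchLo qk < matchLo p ≤ matchHi p < matchHi r = μ r
          have h1 : matchLo μ qk < matchLo μ p := hqkn.1
          have h2 : matchHi μ p < matchHi μ r := hrn.2
          have hloqk' : matchLo μ qk = qk := min_eq_left hqklo.le
          have hhir : matchHi μ r = μ r := max_eq_right hrlo.le
          have h3 : matchLo μ p ≤ matchHi μ p := min_le_max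
          omega
      have hcardqk : (Nset m μ qk).card = n - 1 := by
        rw [hNqk, Finset.card_erase_of_mem hqkmem, hcard]
      have hnvqk : nv qk = n - 1 := IH _ (by omega) qk hqkIcc hcardqk
      have h1 : nv qk ≤ nv qs := hmax qk hqkIcc hqkn
      have h2 : nv qs ≤ n - 1 := hub qs hqsI hqsn
      omega

lemma nv_eq_Fset_card {m : ℕ} {μ nv : ℕ → ℕ} (hμ : IsPerfectMatchingOn m μ)
    (hnc : IsNoncrossingOn m μ) (hnv : IsNestingValue m μ nv)
    {p : ℕ} (hp : p ∈ Set.Icc 1 (2*m)) : nv p = (Fset m μ p).card := by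
  rw [← Nset_eq_Fset hμ hnc hp]
  exact nv_eq_card hμ hnc hnv _ p hp rfl

lemma Fset_step {m : ℕ} {μ : ℕ → ℕ} (hμ : IsPerfectMatchingOn m μ) (p : ℕ) :
    (Fset m μ (p+1)).card ≤ (Fset m μ p).card + 1 ∧
    (Fset m μ p).card ≤ (Fset m μ (p+1)).card + 1 := by
  constructor
  · have hsub : Fset m μ (p+1) ⊆ insert p (Fset m μ p) := by
      intro q hq
      simp only [Fset, Finset.mem_filter, Finset.mem_Icc] at hq
      obtain ⟨hqI, h1, h2⟩ := hq
      rcases eq_or_lt_of_le (Nat.lt_succ_iff.mp h1) with heq | hlt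
      · exact Finset.mem_insert.mpr (Or.inl heq)
      · refine Finset.mem_insert.mpr (Or.inr ?_)
        simp only [Fset, Finset.mem_filter, Finset.mem_Icc]
        exact ⟨hqI, hlt, by omega⟩
    calc (Fset m μ (p+1)).card ≤ (insert p (Fset m μ p)).card := Finset.card_le_card hsub
      _ ≤ (Fset m μ p).card + 1 := Finset.card_insert_le _ _
  · have hsub : Fset m μ p ⊆ insert (μ (p+1)) (Fset m μ (p+1)) := by
      intro q hq
      simp only [Fset, Finset.mem_filter, Finset.mem_Icc] at hq
      obtain ⟨hqI, h1, h2⟩ := hq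
      rcases eq_or_lt_of_le (Nat.succ_le_of_lt h2) with heq | hlt
      · refine Finset.mem_insert.mpr (Or.inl ?_)
        obtain ⟨-, hinv, -⟩ := hμ q (Set.mem_Icc.mpr hqI)
        have heq' : p + 1 = μ q := heq
        rw [heq', hinv]
      · refine Finset.mem_insert.mpr (Or.inr ?_)
        simp only [Fset, Finset.mem_filter, Finset.mem_Icc]
        exact ⟨hqI, by omega, hlt⟩
    calc (Fset m μ p).card ≤ (insert (μ (p+1)) (Fset m μ (p+1))).card :=
          Finset.card_le_card hsub
      _ ≤ (Fset m μ (p+1)).card + 1 := Finset.card_insert_le _ _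

lemma ivt_up (g : ℕ → ℕ) (t : ℕ) :
    ∀ n a, (∀ k, a ≤ k → k < a + n → g (k+1) ≤ g k + 1) → g a ≤ t → t ≤ g (a + n) →
    ∃ p, a ≤ p ∧ p ≤ a + n ∧ g p = t := by
  intro n
  induction n with
  | zero => exact fun a _ h1 h2 => ⟨a, le_refl a, le_refl a, le_antisymm h1 h2⟩
  | succ n IHn =>
    intro a hstep h1 h2
    rcases eq_or_lt_of_le h1 with heq | hlt
    · exact ⟨a, le_refl a, Nat.le_add_right _ _, heq⟩
    · have ha1 : g (a+1) ≤ t := by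
        have := hstep a (le_refl a) (by omega)
        omega
      have h2' : t ≤ g (a + 1 + n) := by
        have : a + 1 + n = a + (n + 1) := by omega
        rw [this]; exact h2
      obtain ⟨p, hp1, hp2, hp3⟩ := IHn (a+1) (fun k hk1 hk2 => hstep k (by omega) (by omega)) ha1 h2'
      exact ⟨p, by omega, by omega, hp3⟩

lemma ivt_down (g : ℕ → ℕ) (t : ℕ) :
    ∀ n a, (∀ k, a ≤ k → k < a + n → g k ≤ g (k+1) + 1) → t ≤ g a → g (a + n) ≤ t →
    ∃ p, a ≤ p ∧ p ≤ a + n ∧ g p = t := by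
  intro n
  induction n with
  | zero => exact fun a _ h1 h2 => ⟨a, le_refl a, le_refl a, le_antisymm h2 h1⟩
  | succ n IHn =>
    intro a hstep h1 h2
    rcases eq_or_lt_of_le h1 with heq | hlt
    · exact ⟨a, le_refl a, Nat.le_add_right _ _, heq.symm⟩
    · have ha1 : t ≤ g (a+1) := by
        have := hstep a (le_refl a) (by omega)
        omega
      have h2' : g (a + 1 + n) ≤ t := by
        have : a + 1 + n = a + (n + 1) := by omega
        rw [this]; exact h2
      obtain ⟨p, hp1, hp2, hp3⟩ := IHn (a+1) (fun k hk1 hk2 => hstep k (by omega) (by omega)) ha1 h2'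
      exact ⟨p, by omega, by omega, hp3⟩

/-- Let `M` be a noncrossing perfect matching on the points `{1, …, 2m}`.
For all `i ≤ j` in `{1, …, 2m}`, the set `{nv(p) : i ≤ p ≤ j}` of nesting-values of the
edges incident to the points of `[i, j]` is a set of consecutive integers; in particular,
for every `t` between the minimum and the maximum of the values `nv(p)` (`i ≤ p ≤ j`)
there exists a point `p` with `i ≤ p ≤ j` and `nv(p) = t`. -/
theorem nestingValue_interval_consecutive (m : ℕ) (hm : 1 ≤ m) (μ nv : ℕ → ℕ)
    (hμ : IsPerfectMatchingOn m μ) (hnc : IsNoncrossingOn m μ)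
    (hnv : IsNestingValue m μ nv) :
    ∀ i j : ℕ, 1 ≤ i → i ≤ j → j ≤ 2 * m →
      ∀ t : ℕ,
        (∃ p : ℕ, i ≤ p ∧ p ≤ j ∧ nv p ≤ t) →
        (∃ p : ℕ, i ≤ p ∧ p ≤ j ∧ t ≤ nv p) →
        ∃ p : ℕ, i ≤ p ∧ p ≤ j ∧ nv p = t := by
  intro i j hi hij hj t h1 h2
  obtain ⟨p1, hp1i, hp1j, hp1t⟩ := h1
  obtain ⟨p2, hp2i, hp2j, hp2t⟩ := h2
  have hmem : ∀ p, i ≤ p → p ≤ j → p ∈ Set.Icc 1 (2*m) := fun p h h' =>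
    Set.mem_Icc.mpr ⟨le_trans hi h, le_trans h' hj⟩
  have hstep : ∀ k, i ≤ k → k < j → nv (k+1) ≤ nv k + 1 ∧ nv k ≤ nv (k+1) + 1 := by
    intro k hk1 hk2
    have hk : k ∈ Set.Icc 1 (2*m) := hmem k hk1 (by omega)
    have hk' : k+1 ∈ Set.Icc 1 (2*m) := hmem (k+1) (by omega) (by omega)
    rw [nv_eq_Fset_card hμ hnc hnv hk, nv_eq_Fset_card hμ hnc hnv hk']
    exact Fset_step hμ k
  rcases le_total p1 p2 with hle | hle
  · have heq : p1 + (p2 - p1) = p2 := by omega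
    obtain ⟨p, hpa, hpb, hpt⟩ := ivt_up nv t (p2 - p1) p1
      (fun k hk1 hk2 => (hstep k (by omega) (by omega)).1)
      hp1t (by rw [heq]; exact hp2t)
    exact ⟨p, by omega, by omega, hpt⟩
  · have heq : p2 + (p1 - p2) = p1 := by omega
    obtain ⟨p, hpa, hpb, hpt⟩ := ivt_down nv t (p1 - p2) p2
      (fun k hk1 hk2 => (hstep k (by omega) (by omega)).2)
      hp2t (by rw [heq]; exact hp1t)
    exact ⟨p, by omega, by omega, hpt⟩
end

section
/- Let M be a noncrossing perfect matching on the points {1, …, 2m}, and let ≺ be the linear order on {1, …, 2m} defined by: p ≺ q if and only if nv(p) < nv(q), or nv(p) = nv(q) and p < q. Then the two endpoints of every edge of M are consecutive in ≺; consequently, the m edges of M form an m-necklace in ≺ (no two edges of M nest with respect to ≺). -/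
/-- The linear order `≺` on the points `{1, …, 2m}` determined by the nesting-values:
`p ≺ q` iff `nv p < nv q`, or `nv p = nv q` and `p < q`. -/
def nvPrec (nv : ℕ → ℕ) (p q : ℕ) : Prop :=
  nv p < nv q ∨ (nv p = nv q ∧ p < q)

lemma nv_lt_of_nests (m : ℕ) (μ nv : ℕ → ℕ) (hnv : IsNestingValue m μ nv)
    (r q : ℕ) (hr : r ∈ Set.Icc 1 (2 * m)) (hq : q ∈ Set.Icc 1 (2 * m))
    (h : MatchNests μ r q) : nv r < nv q := by
  obtain ⟨q', hq', hn, heq, hmax⟩ := (hnv q hq).2 ⟨r, hr, h⟩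
  have := hmax r hr h
  omega

lemma nv_mu (m : ℕ) (μ nv : ℕ → ℕ) (hμ : IsPerfectMatchingOn m μ)
    (hnv : IsNestingValue m μ nv) (p : ℕ) (hp : p ∈ Set.Icc 1 (2 * m)) :
    nv (μ p) = nv p := by
  obtain ⟨hp1, hp2, hp3⟩ := hμ p hp
  have hiff : ∀ r, MatchNests μ r (μ p) ↔ MatchNests μ r p := by
    intro r
    simp only [MatchNests, matchLo, matchHi, hp2]
    omega
  by_cases h : ∃ q ∈ Set.Icc 1 (2 * m), MatchNests μ q p
  · obtain ⟨q1, hq1, hn1, he1, hm1⟩ := (hnv p hp).2 h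
    obtain ⟨q2, hq2, hn2, he2, hm2⟩ := (hnv (μ p) hp1).2
      (by obtain ⟨q, hq, hn⟩ := h; exact ⟨q, hq, (hiff q).2 hn⟩)
    have h1 := hm1 q2 hq2 ((hiff q2).1 hn2)
    have h2 := hm2 q1 hq1 ((hiff q1).2 hn1)
    omega
  · rw [(hnv p hp).1 h,
      (hnv (μ p) hp1).1 (fun ⟨q, hq, hn⟩ => h ⟨q, hq, (hiff q).1 hn⟩)]

/-- Let `M` be a noncrossing perfect matching on `{1, …, 2m}` and let
`≺` be the order defined by `p ≺ q` iff `nv p < nv q`, or `nv p = nv q` and `p < q`.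
Then the endpoints of every edge of `M` are consecutive in `≺` (no point lies strictly
`≺`-between `p` and `μ p`); consequently, the `m` edges of `M` form an `m`-necklace in
`≺`: no two independent edges of `M` nest with respect to `≺`. -/
theorem nestingValue_order_necklace (m : ℕ) (hm : 1 ≤ m) (μ nv : ℕ → ℕ)
    (hμ : IsPerfectMatchingOn m μ) (hnc : IsNoncrossingOn m μ)
    (hnv : IsNestingValue m μ nv) :
    (∀ p ∈ Set.Icc 1 (2 * m), ∀ q ∈ Set.Icc 1 (2 * m),
      nvPrec nv p q → nvPrec nv q (μ p) → False) ∧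
    (∀ p ∈ Set.Icc 1 (2 * m), ∀ q ∈ Set.Icc 1 (2 * m),
      q ≠ p → q ≠ μ p →
      ¬ (nvPrec nv p q ∧ nvPrec nv q (μ q) ∧ nvPrec nv (μ q) (μ p))) := by
  have key : ∀ p ∈ Set.Icc 1 (2 * m), ∀ q ∈ Set.Icc 1 (2 * m),
      nvPrec nv p q → nvPrec nv q (μ p) → False := by
    intro p hp q hq h1 h2
    have hA := nv_mu m μ nv hμ hnv p hp
    have hfacts : nv q = nv p ∧ p < q ∧ q < μ p := by
      unfold nvPrec at h1 h2; omega
    obtain ⟨hqp, hlt1, hlt2⟩ := hfacts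
    obtain ⟨hpI, hpinv, hpne⟩ := hμ p hp
    obtain ⟨hqI, hqinv, hqne⟩ := hμ q hq
    have hne1 : μ q ≠ p := by
      intro h
      have : q = μ p := by rw [← hqinv, h]
      omega
    have hne2 : μ q ≠ μ p := by
      intro h
      have : q = p := by rw [← hqinv, h, hpinv]
      omega
    rcases lt_trichotomy (μ q) p with hc | hc | hc
    · exact hnc q hq p hp (by simp only [matchLo, matchHi]; omega)
    · exact hne1 hc
    · rcases lt_trichotomy (μ q) (μ p) with hd | hd | hd
      · have hn : MatchNests μ p q := by
          simp only [MatchNests, matchLo, matchHi]; omega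
        have := nv_lt_of_nests m μ nv hnv p q hp hq hn
        omega
      · exact hne2 hd
      · exact hnc p hp q hq (by simp only [matchLo, matchHi]; omega)
  refine ⟨key, ?_⟩
  rintro p hp q hq _ _ ⟨h1, h2, h3⟩
  have h23 : nvPrec nv q (μ p) := by unfold nvPrec at h2 h3 ⊢; omega
  exact key p hp q hq h1 h23
end
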